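/- arXiv:2001.03358 — 3 statements merged into one kernel-verified Lean document; each statement's English description precedes it below -/
import Mathlib

section
/- For coprime nonzero integers p and q, the Dedekind symbol satisfies the reciprocity law S(p/q) + S(q/p) = p/q + q/p + 1/(pq) - 3*sgn(pq). -/
open scoped Classical

/-- The sawtooth function `((x))`. -/
noncomputable def sawtooth (x : ℝ) : ℝ :=
  if ∃ n : ℤ, x = (n : ℝ) then 0 else x - ⌊x⌋ - 1/2

/-- The Dedekind sum `s(p,q) = ∑_{k=1}^{|q|-1} ((k/q)) ((kp/q))`. -/
noncomputable def dedekindSum (p q : ℤ) : ℝ :=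
  ∑ k ∈ Finset.Icc 1 (q.natAbs - 1),
    sawtooth ((k : ℝ) / (q : ℝ)) * sawtooth ((k : ℝ) * (p : ℝ) / (q : ℝ))

/-- The Dedekind symbol `S(p/q) = 12 sgn(q) s(p,q)`. -/
noncomputable def dedekindSymbol (p q : ℤ) : ℝ :=
  12 * (q.sign : ℝ) * dedekindSum p q

open Finset


lemma sawtooth_of_not_int {x : ℝ} (hx : ¬ ∃ n : ℤ, x = (n : ℝ)) :
    sawtooth x = Int.fract x - 1/2 := by
  rw [sawtooth, if_neg hx, ← Int.self_sub_floor]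

lemma fract_ne_zero_of_not_int {x : ℝ} (hx : ¬ ∃ n : ℤ, x = (n : ℝ)) :
    Int.fract x ≠ 0 := by
  intro h0
  exact hx ⟨⌊x⌋, by rw [← Int.self_sub_floor] at h0; linarith⟩

lemma sawtooth_neg (x : ℝ) : sawtooth (-x) = - sawtooth x := by
  by_cases hx : ∃ n : ℤ, x = (n : ℝ)
  · obtain ⟨n, rfl⟩ := hx
    rw [sawtooth, sawtooth, if_pos ⟨-n, by push_cast; ring⟩, if_pos ⟨n, rfl⟩, neg_zero]
  · have hx' : ¬ ∃ n : ℤ, -x = (n : ℝ) := by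
      rintro ⟨n, hn⟩
      exact hx ⟨-n, by push_cast; linarith⟩
    rw [sawtooth_of_not_int hx, sawtooth_of_not_int hx',
      Int.fract_neg (fract_ne_zero_of_not_int hx)]
    ring

lemma not_int_div {m k : ℕ} (hk : 0 < k) (hdvd : ¬ k ∣ m) :
    ¬ ∃ n : ℤ, ((m : ℝ) / (k : ℝ)) = (n : ℝ) := by
  rintro ⟨n, hn⟩
  have hk' : (k : ℝ) ≠ 0 := by positivity
  rw [div_eq_iff hk'] at hn
  have h2 : (m : ℤ) = n * (k : ℤ) := by exact_mod_cast hn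
  have h3 : (k : ℤ) ∣ (m : ℤ) := ⟨n, by linarith⟩
  exact hdvd (Int.ofNat_dvd.mp h3)
lemma Icc_one_pred (k : ℕ) : Finset.Icc 1 (k-1) = Finset.Ico 1 k := by
  ext a; simp only [Finset.mem_Icc, Finset.mem_Ico]; omega

lemma gauss_sum (k : ℕ) : ∑ r ∈ Icc 1 (k-1), (r:ℝ) = (k:ℝ) * ((k:ℝ)-1) / 2 := by
  rw [Icc_one_pred]
  induction k with
  | zero => simp
  | succ n ih =>
      rcases Nat.eq_zero_or_pos n with h0 | h0
      · subst h0; norm_num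
      · rw [Finset.sum_Ico_succ_top h0, ih]
        push_cast
        ring

lemma gauss_sq_sum (k : ℕ) :
    ∑ r ∈ Icc 1 (k-1), (r:ℝ)^2 = (k:ℝ) * ((k:ℝ)-1) * (2*(k:ℝ)-1) / 6 := by
  rw [Icc_one_pred]
  induction k with
  | zero => simp
  | succ n ih =>
      rcases Nat.eq_zero_or_pos n with h0 | h0
      · subst h0; norm_num
      · rw [Finset.sum_Ico_succ_top h0, ih]
        push_cast
        ring

lemma mod_mem_Icc {h k : ℕ} (hk : 0 < k) (hco : Nat.Coprime h k) {r : ℕ}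
    (hr : r ∈ Icc 1 (k-1)) : h * r % k ∈ Icc 1 (k-1) := by
  simp only [Finset.mem_Icc] at hr ⊢
  have hlt : h * r % k < k := Nat.mod_lt _ hk
  have hne : h * r % k ≠ 0 := by
    intro h0
    have hdvd : k ∣ h * r := Nat.dvd_iff_mod_eq_zero.mpr h0
    have : k ∣ r := (Nat.Coprime.dvd_of_dvd_mul_left (hco.symm) hdvd)
    have := Nat.le_of_dvd (by omega) this
    omega
  omega

lemma mod_injOn {h k : ℕ} (hk : 0 < k) (hco : Nat.Coprime h k) :
    ∀ r ∈ Icc 1 (k-1), ∀ r' ∈ Icc 1 (k-1), h * r % k = h * r' % k → r = r' := by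
  intro r hr r' hr' heq
  simp only [Finset.mem_Icc] at hr hr'
  have : r ≡ r' [MOD k] := Nat.ModEq.cancel_left_of_coprime (by rwa [Nat.coprime_comm] at hco) heq
  have h1 : r % k = r' % k := this
  rw [Nat.mod_eq_of_lt (by omega), Nat.mod_eq_of_lt (by omega)] at h1
  exact h1

lemma sum_mod_bij {h k : ℕ} (hco : Nat.Coprime h k) (f : ℕ → ℝ) :
    ∑ r ∈ Icc 1 (k-1), f (h * r % k) = ∑ r ∈ Icc 1 (k-1), f r := by
  rcases Nat.eq_zero_or_pos k with h0 | hk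
  · subst h0; simp
  have himg : (Icc 1 (k-1)).image (fun r => h * r % k) = Icc 1 (k-1) := by
    apply Finset.eq_of_subset_of_card_le
    · intro t ht
      simp only [Finset.mem_image] at ht
      obtain ⟨r, hr, rfl⟩ := ht
      exact mod_mem_Icc hk hco hr
    · rw [Finset.card_image_of_injOn (fun a ha b hb => mod_injOn hk hco a ha b hb)]
  conv_rhs => rw [← himg]
  rw [Finset.sum_image (mod_injOn hk hco)]
lemma not_dvd_of_Icc {k r : ℕ} (hr : r ∈ Icc 1 (k-1)) : ¬ k ∣ r := by
  simp only [Finset.mem_Icc] at hr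
  intro hdvd
  have := Nat.le_of_dvd (by omega) hdvd
  omega

lemma not_dvd_mul_of_Icc {h k r : ℕ} (hco : Nat.Coprime h k) (hr : r ∈ Icc 1 (k-1)) :
    ¬ k ∣ r * h := by
  intro hdvd
  exact not_dvd_of_Icc hr (Nat.Coprime.dvd_of_dvd_mul_right hco.symm hdvd)

lemma dedekindSum_formula (h k : ℕ) (hk : 1 ≤ k) (hco : Nat.Coprime h k) :
    dedekindSum (h:ℤ) (k:ℤ) =
      (∑ r ∈ Icc 1 (k-1), (r:ℝ) * ((h * r % k : ℕ):ℝ)) / (k:ℝ)^2 - ((k:ℝ)-1)/4 := by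
  have hk0 : (0:ℕ) < k := hk
  have hkR : (k:ℝ) ≠ 0 := by positivity
  rw [dedekindSum]
  have hnat : ((k:ℤ)).natAbs = k := Int.natAbs_natCast k
  rw [hnat]
  have key : ∀ r ∈ Icc 1 (k-1),
      sawtooth ((r:ℝ) / ((k:ℤ) : ℝ)) * sawtooth ((r:ℝ) * ((h:ℤ) : ℝ) / ((k:ℤ) : ℝ))
      = ((r:ℝ)/(k:ℝ) - 1/2) * (((h * r % k : ℕ):ℝ)/(k:ℝ) - 1/2) := by
    intro r hr
    have hmem := hr
    simp only [Finset.mem_Icc] at hmem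
    have hx1 : ((r:ℕ):ℝ) / ((k:ℕ):ℝ) = ((r:ℝ) / ((k:ℤ):ℝ)) := by push_cast; ring
    have hx2 : ((r*h:ℕ):ℝ) / ((k:ℕ):ℝ) = ((r:ℝ) * ((h:ℤ):ℝ) / ((k:ℤ):ℝ)) := by push_cast; ring
    have hn1 : ¬ ∃ n : ℤ, ((r:ℝ) / ((k:ℤ):ℝ)) = (n:ℝ) := by
      rw [← hx1]; exact not_int_div hk0 (not_dvd_of_Icc hr)
    have hn2 : ¬ ∃ n : ℤ, ((r:ℝ) * ((h:ℤ):ℝ) / ((k:ℤ):ℝ)) = (n:ℝ) := by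
      rw [← hx2]; exact not_int_div hk0 (not_dvd_mul_of_Icc hco hr)
    rw [sawtooth_of_not_int hn1, sawtooth_of_not_int hn2, ← hx1, ← hx2,
      Int.fract_div_natCast_eq_div_natCast_mod, Int.fract_div_natCast_eq_div_natCast_mod,
      Nat.mod_eq_of_lt (by omega), Nat.mul_comm r h]
  rw [Finset.sum_congr rfl key]
  have expand : ∀ r ∈ Icc 1 (k-1),
      ((r:ℝ)/(k:ℝ) - 1/2) * (((h * r % k : ℕ):ℝ)/(k:ℝ) - 1/2)
      = (r:ℝ) * ((h * r % k : ℕ):ℝ) * ((k:ℝ)^2)⁻¹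
        - (r:ℝ) * (2*(k:ℝ))⁻¹ - ((h * r % k : ℕ):ℝ) * (2*(k:ℝ))⁻¹ + 1/4 := by
    intro r _
    field_simp
    ring
  rw [Finset.sum_congr rfl expand]
  rw [Finset.sum_add_distrib, Finset.sum_sub_distrib, Finset.sum_sub_distrib,
    ← Finset.sum_mul, ← Finset.sum_mul, ← Finset.sum_mul]
  have hmodsum : ∑ r ∈ Icc 1 (k-1), ((h * r % k : ℕ):ℝ) = ∑ r ∈ Icc 1 (k-1), (r:ℝ) :=
    sum_mod_bij hco (fun t => (t:ℝ))
  rw [hmodsum, gauss_sum, Finset.sum_const, Nat.card_Icc]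
  have hcard : ((k - 1 + 1 - 1 : ℕ):ℝ) = (k:ℝ) - 1 := by
    have : k - 1 + 1 - 1 = k - 1 := by omega
    rw [this]
    push_cast [Nat.cast_sub hk]
    ring
  rw [nsmul_eq_mul, hcard]
  field_simp
  ring
lemma Icc_succ_left' (a b : ℕ) : Finset.Icc (a+1) b = Finset.Ioc a b := by
  ext x; simp only [Finset.mem_Icc, Finset.mem_Ioc]; omega

lemma div_le_pred {a b c : ℕ} (hb : 0 < b) (ha : 0 < a) (hc : c ∈ Icc 1 (a-1)) :
    b * c / a ≤ b - 1 := by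
  simp only [Finset.mem_Icc] at hc
  have hca : c < a := by omega
  have : b * c / a < b := by
    rw [Nat.div_lt_iff_lt_mul ha]
    exact mul_lt_mul_of_pos_left hca hb
  omega

lemma swap_sum (h k : ℕ) (hh : 1 ≤ h) (hk : 1 ≤ k) (hco : Nat.Coprime h k) :
    ∑ r ∈ Icc 1 (k-1), (r:ℝ) * ((h * r / k : ℕ):ℝ)
    = ∑ s ∈ Icc 1 (h-1),
        ((∑ r ∈ Icc 1 (k-1), (r:ℝ)) - ∑ r ∈ Icc 1 (k * s / h), (r:ℝ)) := by
  have hk0 : 0 < k := hk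
  have hh0 : 0 < h := hh
  -- Step A : express the floor as a count
  have stepA : ∀ r ∈ Icc 1 (k-1),
      (r:ℝ) * ((h * r / k : ℕ):ℝ)
      = ∑ s ∈ Icc 1 (h-1), (if k * s < h * r then (r:ℝ) else 0) := by
    intro r hr
    have hmem := hr
    simp only [Finset.mem_Icc] at hmem
    have hfilter : (Icc 1 (h-1)).filter (fun s => k * s < h * r) = Icc 1 (h * r / k) := by
      ext s
      simp only [Finset.mem_filter, Finset.mem_Icc]
      have e1 : k * s = s * k := Nat.mul_comm k s
      constructor
      · rintro ⟨⟨hs1, _⟩, hlt⟩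
        refine ⟨hs1, ?_⟩
        rw [Nat.le_div_iff_mul_le hk0]
        omega
      · rintro ⟨hs1, hsle⟩
        have hskr : s * k ≤ h * r := (Nat.le_div_iff_mul_le hk0).mp hsle
        have hne : s * k ≠ h * r := by
          intro heq
          have e2 : r * h = h * r := Nat.mul_comm r h
          exact not_dvd_mul_of_Icc hco hr ⟨s, by omega⟩
        have hsh : s ≤ h - 1 := by
          have := div_le_pred hh0 hk0 hr
          omega
        exact ⟨⟨hs1, hsh⟩, by omega⟩
    have hcount : ∑ s ∈ Icc 1 (h-1), (if k * s < h * r then (1:ℝ) else 0)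
        = ((h * r / k : ℕ):ℝ) := by
      rw [Finset.sum_boole, hfilter, Nat.card_Icc]
      norm_cast
    calc (r:ℝ) * ((h * r / k : ℕ):ℝ)
        = (r:ℝ) * ∑ s ∈ Icc 1 (h-1), (if k * s < h * r then (1:ℝ) else 0) := by rw [hcount]
      _ = ∑ s ∈ Icc 1 (h-1), (if k * s < h * r then (r:ℝ) else 0) := by
          rw [Finset.mul_sum]
          exact Finset.sum_congr rfl (fun s _ => by split <;> ring)
  rw [Finset.sum_congr rfl stepA, Finset.sum_comm]
  apply Finset.sum_congr rfl
  intro s hs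
  have hmem := hs
  simp only [Finset.mem_Icc] at hmem
  have hMk : k * s / h ≤ k - 1 := div_le_pred hk0 hh0 hs
  have hfilter2 : (Icc 1 (k-1)).filter (fun r => k * s < h * r) = Icc (k * s / h + 1) (k-1) := by
    ext r
    simp only [Finset.mem_filter, Finset.mem_Icc]
    constructor
    · rintro ⟨⟨_, hr2⟩, hlt⟩
      have hdr : k * s / h < r := by
        rw [Nat.div_lt_iff_lt_mul hh0]
        have e2 : r * h = h * r := Nat.mul_comm r h
        omega
      exact ⟨by omega, hr2⟩
    · rintro ⟨hr1, hr2⟩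
      have hge1 : 1 ≤ r := le_trans (Nat.succ_le_succ (Nat.zero_le _)) hr1
      have hlt : k * s / h < r := by omega
      rw [Nat.div_lt_iff_lt_mul hh0] at hlt
      have e2 : r * h = h * r := Nat.mul_comm r h
      exact ⟨⟨hge1, hr2⟩, by omega⟩
  rw [← Finset.sum_filter, hfilter2]
  have hsplit : ∑ r ∈ Icc 1 (k * s / h), (r:ℝ) + ∑ r ∈ Icc (k * s / h + 1) (k-1), (r:ℝ)
      = ∑ r ∈ Icc 1 (k-1), (r:ℝ) := by
    rw [show (Icc (k * s / h + 1) (k-1) : Finset ℕ) = Ioc (k * s / h) (k-1) from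
        Icc_succ_left' _ _,
      show (Icc 1 (k * s / h) : Finset ℕ) = Ioc 0 (k * s / h) from Icc_succ_left' 0 _,
      show (Icc 1 (k-1) : Finset ℕ) = Ioc 0 (k-1) from Icc_succ_left' 0 _]
    exact Finset.sum_Ioc_consecutive _ (Nat.zero_le _) hMk
  linarith
lemma recip_pos (h k : ℕ) (hh : 1 ≤ h) (hk : 1 ≤ k) (hco : Nat.Coprime h k) :
    12 * ((h:ℝ) * (k:ℝ)) * (dedekindSum (h:ℤ) (k:ℤ) + dedekindSum (k:ℤ) (h:ℤ))
      = (h:ℝ)^2 + (k:ℝ)^2 + 1 - 3 * (h:ℝ) * (k:ℝ) := by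
  have hhR : (h:ℝ) ≠ 0 := by positivity
  have hkR : (k:ℝ) ≠ 0 := by positivity
  set Ak := ∑ r ∈ Icc 1 (k-1), (r:ℝ) * ((h * r % k : ℕ):ℝ) with hAkdef
  set Ah := ∑ s ∈ Icc 1 (h-1), (s:ℝ) * ((k * s % h : ℕ):ℝ) with hAhdef
  set Tk := ∑ r ∈ Icc 1 (k-1), (r:ℝ) * ((h * r / k : ℕ):ℝ) with hTkdef
  set SM := ∑ s ∈ Icc 1 (h-1), ((k * s / h : ℕ):ℝ) with hSMdef
  set SM2 := ∑ s ∈ Icc 1 (h-1), ((k * s / h : ℕ):ℝ)^2 with hSM2def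
  have f1 : dedekindSum (h:ℤ) (k:ℤ) = Ak / (k:ℝ)^2 - ((k:ℝ)-1)/4 :=
    dedekindSum_formula h k hk hco
  have f2 : dedekindSum (k:ℤ) (h:ℤ) = Ah / (h:ℝ)^2 - ((h:ℝ)-1)/4 :=
    dedekindSum_formula k h hh hco.symm
  -- A = h * Σ r² - k * T
  have eAk : Ak = (h:ℝ) * ((k:ℝ) * ((k:ℝ)-1) * (2*(k:ℝ)-1) / 6) - (k:ℝ) * Tk := by
    rw [hAkdef, hTkdef, ← gauss_sq_sum k, Finset.mul_sum, Finset.mul_sum,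
      ← Finset.sum_sub_distrib]
    apply Finset.sum_congr rfl
    intro r _
    have hdm : k * (h * r / k) + h * r % k = h * r := Nat.div_add_mod (h*r) k
    have hcast : ((h * r % k : ℕ):ℝ) = (h:ℝ)*(r:ℝ) - (k:ℝ)*((h * r / k : ℕ):ℝ) := by
      have := congrArg (Nat.cast : ℕ → ℝ) hdm
      push_cast at this
      linarith
    rw [hcast]; ring
  -- the swap identity
  have eTk : Tk = ((h:ℝ)-1) * ((k:ℝ)*((k:ℝ)-1)/2) - SM2/2 - SM/2 := by
    rw [hTkdef, swap_sum h k hh hk hco]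
    have step : ∀ s ∈ Icc 1 (h-1),
        ((∑ r ∈ Icc 1 (k-1), (r:ℝ)) - ∑ r ∈ Icc 1 (k * s / h), (r:ℝ))
        = (k:ℝ)*((k:ℝ)-1)/2 - (((k * s / h : ℕ):ℝ)^2/2 + ((k * s / h : ℕ):ℝ)/2) := by
      intro s _
      have g2 := gauss_sum (k * s / h + 1)
      rw [Nat.add_sub_cancel] at g2
      rw [gauss_sum k, g2]
      push_cast
      ring
    rw [Finset.sum_congr rfl step, Finset.sum_sub_distrib, Finset.sum_add_distrib,
      Finset.sum_const, Nat.card_Icc, hSM2def, hSMdef, ← Finset.sum_div, ← Finset.sum_div]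
    have hcard : ((h - 1 + 1 - 1 : ℕ):ℝ) = (h:ℝ) - 1 := by
      have e : h - 1 + 1 - 1 = h - 1 := by omega
      rw [e, Nat.cast_sub hh]
      norm_num
    rw [nsmul_eq_mul, hcard]
    ring
  -- h * SM
  have eSM : (h:ℝ) * SM = ((k:ℝ) - 1) * ((h:ℝ)*((h:ℝ)-1)/2) := by
    rw [hSMdef, Finset.mul_sum]
    have step : ∀ s ∈ Icc 1 (h-1),
        (h:ℝ) * ((k * s / h : ℕ):ℝ) = (k:ℝ)*(s:ℝ) - ((k * s % h : ℕ):ℝ) := by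
      intro s _
      have hdm : h * (k * s / h) + k * s % h = k * s := Nat.div_add_mod (k*s) h
      have := congrArg (Nat.cast : ℕ → ℝ) hdm
      push_cast at this
      linarith
    rw [Finset.sum_congr rfl step, Finset.sum_sub_distrib,
      sum_mod_bij hco.symm (fun t => (t:ℝ)), ← Finset.mul_sum, gauss_sum h]
    ring
  -- h² * SM2
  have eSM2 : (h:ℝ)^2 * SM2
      = ((k:ℝ)^2 + 1) * ((h:ℝ)*((h:ℝ)-1)*(2*(h:ℝ)-1)/6) - 2*(k:ℝ)*Ah := by
    rw [hSM2def, Finset.mul_sum]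
    have step : ∀ s ∈ Icc 1 (h-1),
        (h:ℝ)^2 * ((k * s / h : ℕ):ℝ)^2
        = (k:ℝ)^2*(s:ℝ)^2 - 2*(k:ℝ)*((s:ℝ) * ((k * s % h : ℕ):ℝ)) + ((k * s % h : ℕ):ℝ)^2 := by
      intro s _
      have hdm : h * (k * s / h) + k * s % h = k * s := Nat.div_add_mod (k*s) h
      have hc := congrArg (Nat.cast : ℕ → ℝ) hdm
      push_cast at hc
      have e : (h:ℝ) * ((k * s / h : ℕ):ℝ) = (k:ℝ)*(s:ℝ) - ((k * s % h : ℕ):ℝ) := by linarith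
      calc (h:ℝ)^2 * ((k * s / h : ℕ):ℝ)^2 = ((h:ℝ) * ((k * s / h : ℕ):ℝ))^2 := by ring
        _ = ((k:ℝ)*(s:ℝ) - ((k * s % h : ℕ):ℝ))^2 := by rw [e]
        _ = _ := by ring
    rw [Finset.sum_congr rfl step, Finset.sum_add_distrib, Finset.sum_sub_distrib,
      sum_mod_bij hco.symm (fun t => (t:ℝ)^2), ← Finset.mul_sum, ← Finset.mul_sum, ← hAhdef,
      gauss_sq_sum h]
    ring
  -- solve for SM and SM2 and finish
  have hSM : SM = ((k:ℝ) - 1) * ((h:ℝ)*((h:ℝ)-1)/2) / (h:ℝ) := by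
    rw [eq_div_iff hhR]
    linarith [eSM]
  have hSM2 : SM2 = (((k:ℝ)^2 + 1) * ((h:ℝ)*((h:ℝ)-1)*(2*(h:ℝ)-1)/6) - 2*(k:ℝ)*Ah) / (h:ℝ)^2 := by
    rw [eq_div_iff (by positivity)]
    linarith [eSM2]
  rw [f1, f2, eAk, eTk, hSM, hSM2]
  field_simp
  ring
lemma dedekindSum_neg_left (p q : ℤ) : dedekindSum (-p) q = -dedekindSum p q := by
  rw [dedekindSum, dedekindSum, ← Finset.sum_neg_distrib]
  apply Finset.sum_congr rfl
  intro r _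
  have e : (r:ℝ) * ((-p : ℤ):ℝ) / (q:ℝ) = -((r:ℝ) * (p:ℝ) / (q:ℝ)) := by push_cast; ring
  rw [e, sawtooth_neg]
  ring

lemma dedekindSum_neg_right (p q : ℤ) : dedekindSum p (-q) = dedekindSum p q := by
  rw [dedekindSum, dedekindSum, Int.natAbs_neg]
  apply Finset.sum_congr rfl
  intro r _
  have e1 : (r:ℝ) / ((-q : ℤ):ℝ) = -((r:ℝ) / (q:ℝ)) := by push_cast; ring
  have e2 : (r:ℝ) * (p:ℝ) / ((-q : ℤ):ℝ) = -((r:ℝ) * (p:ℝ) / (q:ℝ)) := by push_cast; ring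
  rw [e1, e2, sawtooth_neg, sawtooth_neg]
  ring

lemma dedekindSymbol_neg_left (p q : ℤ) : dedekindSymbol (-p) q = -dedekindSymbol p q := by
  rw [dedekindSymbol, dedekindSymbol, dedekindSum_neg_left]
  ring

lemma dedekindSymbol_neg_right (p q : ℤ) : dedekindSymbol p (-q) = -dedekindSymbol p q := by
  rw [dedekindSymbol, dedekindSymbol, dedekindSum_neg_right, Int.sign_neg]
  push_cast
  ring

lemma recip_main (a b : ℕ) (ha : 1 ≤ a) (hb : 1 ≤ b) (hco : Nat.Coprime a b) :
    dedekindSymbol (a:ℤ) (b:ℤ) + dedekindSymbol (b:ℤ) (a:ℤ)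
      = (a:ℝ)/(b:ℝ) + (b:ℝ)/(a:ℝ) + 1/((a:ℝ)*(b:ℝ)) - 3 := by
  have haR : (a:ℝ) ≠ 0 := by positivity
  have hbR : (b:ℝ) ≠ 0 := by positivity
  have s1 : ((b:ℤ)).sign = 1 := Int.sign_eq_one_iff_pos.mpr (by exact_mod_cast hb)
  have s2 : ((a:ℤ)).sign = 1 := Int.sign_eq_one_iff_pos.mpr (by exact_mod_cast ha)
  rw [dedekindSymbol, dedekindSymbol, s1, s2]
  have key := recip_pos a b ha hb hco
  push_cast
  field_simp
  linear_combination key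

/-- Reciprocity law for Dedekind symbols:
`S(p/q) + S(q/p) = p/q + q/p + 1/(pq) - 3 sgn(pq)`. -/
theorem dedekindSymbol_reciprocity (p q : ℤ) (hp : p ≠ 0) (hq : q ≠ 0)
    (hpq : IsCoprime p q) :
    dedekindSymbol p q + dedekindSymbol q p =
      (p : ℝ) / (q : ℝ) + (q : ℝ) / (p : ℝ) + 1 / ((p : ℝ) * (q : ℝ))
        - 3 * ((p * q).sign : ℝ) := by
  have hg := Int.isCoprime_iff_gcd_eq_one.mp hpq
  rcases hp.lt_or_gt with hpn | hpp <;> rcases hq.lt_or_gt with hqn | hqp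
  · -- p < 0, q < 0
    obtain ⟨a, rfl⟩ : ∃ a : ℕ, p = -(a:ℤ) := ⟨(-p).toNat, by omega⟩
    obtain ⟨b, rfl⟩ : ∃ b : ℕ, q = -(b:ℤ) := ⟨(-q).toNat, by omega⟩
    have ha : 1 ≤ a := by omega
    have hb : 1 ≤ b := by omega
    have hco : Nat.Coprime a b := by
      simpa [Int.gcd, Int.natAbs_neg, Int.natAbs_natCast] using hg
    have hs : ((-(a:ℤ)) * (-(b:ℤ))).sign = 1 := by
      apply Int.sign_eq_one_iff_pos.mpr
      have : (0:ℤ) < (a:ℤ) * (b:ℤ) := mul_pos (by omega) (by omega)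
      rw [neg_mul_neg]; exact this
    simp only [dedekindSymbol_neg_left, dedekindSymbol_neg_right]
    rw [hs]
    push_cast
    linear_combination recip_main a b ha hb hco
  · -- p < 0, q > 0
    obtain ⟨a, rfl⟩ : ∃ a : ℕ, p = -(a:ℤ) := ⟨(-p).toNat, by omega⟩
    obtain ⟨b, rfl⟩ : ∃ b : ℕ, q = (b:ℤ) := ⟨q.toNat, by omega⟩
    have ha : 1 ≤ a := by omega
    have hb : 1 ≤ b := by omega
    have hco : Nat.Coprime a b := by
      simpa [Int.gcd, Int.natAbs_neg, Int.natAbs_natCast] using hg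
    have hs : ((-(a:ℤ)) * (b:ℤ)).sign = -1 := by
      apply Int.sign_eq_neg_one_iff_neg.mpr
      have : (0:ℤ) < (a:ℤ) * (b:ℤ) := mul_pos (by omega) (by omega)
      rw [neg_mul]; linarith
    simp only [dedekindSymbol_neg_left, dedekindSymbol_neg_right]
    rw [hs]
    push_cast
    linear_combination -recip_main a b ha hb hco
  · -- p > 0, q < 0
    obtain ⟨a, rfl⟩ : ∃ a : ℕ, p = (a:ℤ) := ⟨p.toNat, by omega⟩
    obtain ⟨b, rfl⟩ : ∃ b : ℕ, q = -(b:ℤ) := ⟨(-q).toNat, by omega⟩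
    have ha : 1 ≤ a := by omega
    have hb : 1 ≤ b := by omega
    have hco : Nat.Coprime a b := by
      simpa [Int.gcd, Int.natAbs_neg, Int.natAbs_natCast] using hg
    have hs : ((a:ℤ) * (-(b:ℤ))).sign = -1 := by
      apply Int.sign_eq_neg_one_iff_neg.mpr
      have : (0:ℤ) < (a:ℤ) * (b:ℤ) := mul_pos (by omega) (by omega)
      rw [mul_neg]; linarith
    simp only [dedekindSymbol_neg_left, dedekindSymbol_neg_right]
    rw [hs]
    push_cast
    linear_combination -recip_main a b ha hb hco
  · -- p > 0, q > 0
    obtain ⟨a, rfl⟩ : ∃ a : ℕ, p = (a:ℤ) := ⟨p.toNat, by omega⟩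
    obtain ⟨b, rfl⟩ : ∃ b : ℕ, q = (b:ℤ) := ⟨q.toNat, by omega⟩
    have ha : 1 ≤ a := by omega
    have hb : 1 ≤ b := by omega
    have hco : Nat.Coprime a b := by
      simpa [Int.gcd, Int.natAbs_natCast] using hg
    have hs : ((a:ℤ) * (b:ℤ)).sign = 1 :=
      Int.sign_eq_one_iff_pos.mpr (mul_pos (by omega) (by omega))
    rw [hs]
    push_cast
    linear_combination recip_main a b ha hb hco
end

section
/- Let c_1,...,c_l be real numbers with associated 2x2 matrix [[alpha, beta],[gamma, delta]] = [[0,-1],[1,0]] * [[c_1,-1],[1,0]] * ... * [[c_l,-1],[1,0]], and assume gamma is nonzero. Then the tridiagonal matrix Lambda(c_1,...,c_l) is invertible and its inverse has top-left entry -alpha/gamma, bottom-right entry -delta/gamma, and top-right and bottom-left entries both equal to (-1)^{l+1}/gamma. -/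
open scoped Classical

/-- The `l × l` symmetric tridiagonal matrix with diagonal entries `c 0, ..., c (l-1)`
and sub/super-diagonal entries `1`. -/
def tridiag {l : ℕ} (c : Fin l → ℝ) : Matrix (Fin l) (Fin l) ℝ :=
  Matrix.of fun i j =>
    if i = j then c i else if (i : ℕ) + 1 = (j : ℕ) ∨ (j : ℕ) + 1 = (i : ℕ) then 1 else 0

/-- The associated `2 × 2` matrix
`A(c_1,...,c_l) = [[0,-1],[1,0]] * [[c_1,-1],[1,0]] * ⋯ * [[c_l,-1],[1,0]]`. -/
def assocMat {l : ℕ} (c : Fin l → ℝ) : Matrix (Fin 2) (Fin 2) ℝ :=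
  !![0, -1; 1, 0] * (List.ofFn fun i => !![c i, -1; 1, 0]).prod

/-- The signature of a real symmetric matrix: the number of positive eigenvalues
minus the number of negative eigenvalues. -/
noncomputable def signature {n : Type*} [Fintype n] [DecidableEq n]
    (M : Matrix n n ℝ) : ℤ :=
  if hM : M.IsHermitian then
    ((Finset.univ.filter fun i => 0 < hM.eigenvalues i).card : ℤ)
      - ((Finset.univ.filter fun i => hM.eigenvalues i < 0).card : ℤ)
  else 0

def pmat {l : ℕ} (c : Fin l → ℝ) : Matrix (Fin 2) (Fin 2) ℝ :=
  (List.ofFn fun i => !![c i, -1; 1, 0]).prod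

lemma pmat_nil (c : Fin 0 → ℝ) : pmat c = 1 := by simp [pmat]

lemma pmat_succ {l : ℕ} (c : Fin (l+1) → ℝ) :
    pmat c = !![c 0, -1; 1, 0] * pmat (c ∘ Fin.succ) := by
  simp [pmat, List.ofFn_succ]

lemma pmat_succ' {l : ℕ} (c : Fin (l+1) → ℝ) :
    pmat c = pmat (c ∘ Fin.castSucc) * !![c (Fin.last l), -1; 1, 0] := by
  rw [pmat, List.ofFn_succ', List.concat_eq_append, List.prod_append, List.prod_singleton]
  rfl

lemma tridiag_sub_succ {l : ℕ} (c : Fin (l+1) → ℝ) :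
    (tridiag c).submatrix Fin.succ Fin.succ = tridiag (c ∘ Fin.succ) := by
  ext i j
  simp only [tridiag, Matrix.submatrix_apply, Matrix.of_apply, Fin.succ_inj, Fin.val_succ,
    Function.comp_apply]
  have h : ((i:ℕ)+1+1 = (j:ℕ)+1 ∨ (j:ℕ)+1+1 = (i:ℕ)+1) ↔ ((i:ℕ)+1 = j ∨ (j:ℕ)+1 = i) := by omega
  by_cases hij : i = j <;> simp [hij, h]

lemma tridiag_sub_cast {l : ℕ} (c : Fin (l+1) → ℝ) :
    (tridiag c).submatrix Fin.castSucc Fin.castSucc = tridiag (c ∘ Fin.castSucc) := by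
  ext i j
  simp only [tridiag, Matrix.submatrix_apply, Matrix.of_apply, Fin.castSucc_inj,
    Fin.coe_castSucc, Function.comp_apply]

lemma tridiag_apply {l : ℕ} (c : Fin l → ℝ) (i j : Fin l) :
    tridiag c i j = if (i:ℕ) = (j:ℕ) then c i
      else if (i : ℕ) + 1 = (j : ℕ) ∨ (j : ℕ) + 1 = (i : ℕ) then 1 else 0 := by
  simp [tridiag, Fin.ext_iff]

lemma minor01 {l : ℕ} (c : Fin (l+2) → ℝ) :
    ((tridiag c).submatrix Fin.succ ((1:Fin (l+2)).succAbove)).det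
      = (tridiag (c ∘ Fin.succ ∘ Fin.succ)).det := by
  rw [Matrix.det_succ_column_zero]
  rw [Fin.sum_univ_succ]
  have h1 : ∀ i : Fin l, ((tridiag c).submatrix Fin.succ ((1:Fin (l+2)).succAbove)) i.succ 0 = 0 := by
    intro i
    have : ((1:Fin (l+2)).succAbove 0) = 0 := rfl
    rw [Matrix.submatrix_apply, this, tridiag_apply]
    simp [Fin.val_succ]
  have h0 : ((tridiag c).submatrix Fin.succ ((1:Fin (l+2)).succAbove)) 0 0 = 1 := by
    have : ((1:Fin (l+2)).succAbove 0) = 0 := rfl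
    rw [Matrix.submatrix_apply, this, tridiag_apply]
    simp
  have hsub : (((tridiag c).submatrix Fin.succ ((1:Fin (l+2)).succAbove)).submatrix
      (Fin.succAbove 0) Fin.succ) = tridiag (c ∘ Fin.succ ∘ Fin.succ) := by
    ext i j
    have hA : ((0:Fin (l+1)).succAbove i).succ = i.succ.succ := by
      simp [Fin.zero_succAbove]
    have hB : ((1:Fin (l+2)).succAbove j.succ) = j.succ.succ := by
      rw [Fin.succAbove, if_neg]
      simp [Fin.lt_iff_val_lt_val]
    rw [Matrix.submatrix_apply, Matrix.submatrix_apply, hA, hB, tridiag_apply, tridiag_apply]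
    simp [Fin.val_succ]
  simp only [h1, h0, hsub]
  simp

lemma det_tridiag : ∀ (l : ℕ) (c : Fin l → ℝ), (tridiag c).det = pmat c 0 0 := by
  intro l
  induction l using Nat.strong_induction_on with
  | _ l ih =>
    match l with
    | 0 => intro c; simp [pmat_nil]
    | 1 =>
      intro c
      rw [Matrix.det_fin_one]
      simp [pmat, tridiag_apply]
    | (n+2) =>
      intro c
      rw [Matrix.det_succ_row_zero, Fin.sum_univ_succ, Fin.sum_univ_succ]
      have hz : ∀ j : Fin n, tridiag c 0 j.succ.succ = 0 := by
        intro j; rw [tridiag_apply]; simp [Fin.val_succ]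
      have h00 : tridiag c 0 0 = c 0 := by rw [tridiag_apply]; simp
      have h01 : tridiag c 0 1 = 1 := by
        rw [tridiag_apply]
        have : ((1:Fin (n+2)):ℕ) = 1 := rfl
        simp [this]
      have hm0 : ((tridiag c).submatrix Fin.succ ((0:Fin (n+2)).succAbove)).det
          = (tridiag (c ∘ Fin.succ)).det := by
        have he : (Fin.succAbove (0 : Fin (n+2))) = Fin.succ := funext Fin.zero_succAbove
        rw [he, tridiag_sub_succ]
      simp only [Fin.succ_zero_eq_one, hz, h00, h01, hm0, minor01,
        ih (n+1) (by omega), ih n (by omega)]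
      rw [pmat_succ c, pmat_succ (c ∘ Fin.succ)]
      simp [Matrix.mul_apply, Matrix.vecMul, dotProduct, Fin.sum_univ_two,
        Function.comp]
      rw [show c ∘ Fin.succ ∘ Fin.succ = (c ∘ Fin.succ) ∘ Fin.succ from rfl]

lemma pmat_10 {m : ℕ} (c : Fin (m+1) → ℝ) : pmat c 1 0 = pmat (c ∘ Fin.succ) 0 0 := by
  rw [pmat_succ]
  simp [Matrix.mul_apply, Fin.sum_univ_two]

lemma pmat_01 {m : ℕ} (c : Fin (m+1) → ℝ) : pmat c 0 1 = -pmat (c ∘ Fin.castSucc) 0 0 := by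
  rw [pmat_succ']
  simp [Matrix.mul_apply, Fin.sum_univ_two]

lemma adj00 {m : ℕ} (c : Fin (m+1) → ℝ) :
    (tridiag c).adjugate 0 0 = pmat c 1 0 := by
  rw [Matrix.adjugate_apply, Matrix.det_succ_row_zero, Fin.sum_univ_succ]
  have h0 : ((tridiag c).updateRow 0 (Pi.single 0 1)) 0 0 = 1 := by
    rw [Matrix.updateRow_self]; simp
  have hz : ∀ j : Fin m, ((tridiag c).updateRow 0 (Pi.single 0 1)) 0 j.succ = 0 := by
    intro j; rw [Matrix.updateRow_self]
    exact Pi.single_eq_of_ne (Fin.succ_ne_zero j) 1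
  have hsub : ((tridiag c).updateRow 0 (Pi.single 0 1)).submatrix Fin.succ
      (Fin.succAbove 0) = tridiag (c ∘ Fin.succ) := by
    have he : (Fin.succAbove (0 : Fin (m+1))) = Fin.succ := funext Fin.zero_succAbove
    rw [he]
    have : ((tridiag c).updateRow 0 (Pi.single 0 1)).submatrix Fin.succ Fin.succ
        = (tridiag c).submatrix Fin.succ Fin.succ := by
      ext i j
      simp [Matrix.updateRow_ne (Fin.succ_ne_zero i)]
    rw [this, tridiag_sub_succ]
  simp only [h0, hz, hsub]
  rw [pmat_10, det_tridiag]
  simp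

lemma adj_last {m : ℕ} (c : Fin (m+1) → ℝ) :
    (tridiag c).adjugate (Fin.last m) (Fin.last m) = -pmat c 0 1 := by
  rw [Matrix.adjugate_apply, Matrix.det_succ_row _ (Fin.last m)]
  rw [Finset.sum_eq_single (Fin.last m)]
  · have h0 : ((tridiag c).updateRow (Fin.last m) (Pi.single (Fin.last m) 1))
        (Fin.last m) (Fin.last m) = 1 := by
      rw [Matrix.updateRow_self]; simp
    have hsub : ((tridiag c).updateRow (Fin.last m) (Pi.single (Fin.last m) 1)).submatrix
        (Fin.last m).succAbove ((Fin.last m).succAbove) = tridiag (c ∘ Fin.castSucc) := by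
      rw [Fin.succAbove_last]
      have : ((tridiag c).updateRow (Fin.last m) (Pi.single (Fin.last m) 1)).submatrix
          Fin.castSucc Fin.castSucc = (tridiag c).submatrix Fin.castSucc Fin.castSucc := by
        ext i j
        simp [Matrix.updateRow_ne (Fin.castSucc_lt_last i).ne]
      rw [this, tridiag_sub_cast]
    rw [h0, hsub, det_tridiag, pmat_01]
    simp [pow_mul]
  · intro j _ hj
    rw [Matrix.updateRow_self, Pi.single_eq_of_ne hj]
    ring
  · simp

lemma adj_corner {m : ℕ} (c : Fin (m+1) → ℝ) :
    (tridiag c).adjugate 0 (Fin.last m) = (-1) ^ m := by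
  rw [Matrix.adjugate_apply, Matrix.det_succ_row _ (Fin.last m)]
  rw [Finset.sum_eq_single (0 : Fin (m+1))]
  · have h0 : ((tridiag c).updateRow (Fin.last m) (Pi.single 0 1)) (Fin.last m) 0 = 1 := by
      rw [Matrix.updateRow_self]; simp
    have hdet : (((tridiag c).updateRow (Fin.last m) (Pi.single 0 1)).submatrix
        (Fin.last m).succAbove ((0 : Fin (m+1)).succAbove)).det = 1 := by
      set N := ((tridiag c).updateRow (Fin.last m) (Pi.single 0 1)).submatrix
        (Fin.last m).succAbove ((0 : Fin (m+1)).succAbove) with hN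
      have hentry : ∀ i j : Fin m, N i j = tridiag c (Fin.castSucc i) (Fin.succ j) := by
        intro i j
        rw [hN, Matrix.submatrix_apply, Fin.succAbove_last, Fin.zero_succAbove,
          Matrix.updateRow_ne (Fin.castSucc_lt_last i).ne]
      rw [Matrix.det_of_lowerTriangular N]
      · have : ∀ i : Fin m, N i i = 1 := by
          intro i
          rw [hentry, tridiag_apply]
          simp
        simp [this]
      · intro i j hij
        have hlt : (i:ℕ) < (j:ℕ) := hij
        rw [hentry, tridiag_apply]
        simp only [Fin.coe_castSucc, Fin.val_succ]
        rw [if_neg (by omega), if_neg (by omega)]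
    rw [h0, hdet, mul_one, mul_one]
    simp [Fin.val_last]
  · intro j _ hj
    rw [Matrix.updateRow_self, Pi.single_eq_of_ne hj]
    ring
  · simp

lemma tridiag_symm {l : ℕ} (c : Fin l → ℝ) : (tridiag c).transpose = tridiag c := by
  ext i j
  rw [Matrix.transpose_apply, tridiag_apply, tridiag_apply]
  by_cases h : (i:ℕ) = (j:ℕ)
  · have : i = j := Fin.ext h
    simp [this]
  · rw [if_neg (by omega), if_neg h]
    by_cases h2 : (i:ℕ)+1 = (j:ℕ) ∨ (j:ℕ)+1 = (i:ℕ)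
    · rw [if_pos (by omega), if_pos h2]
    · rw [if_neg (by omega), if_neg h2]

lemma adj_corner' {m : ℕ} (c : Fin (m+1) → ℝ) :
    (tridiag c).adjugate (Fin.last m) 0 = (-1) ^ m := by
  have := congrArg (fun M => M (Fin.last m) (0 : Fin (m+1)))
    (Matrix.adjugate_transpose (tridiag c))
  simp only [Matrix.transpose_apply, tridiag_symm] at this
  rw [← this, adj_corner c]

lemma assoc10 {l : ℕ} (c : Fin l → ℝ) : assocMat c 1 0 = pmat c 0 0 := by
  simp [assocMat, pmat, Matrix.mul_apply, Fin.sum_univ_two]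
lemma assoc00 {l : ℕ} (c : Fin l → ℝ) : assocMat c 0 0 = -pmat c 1 0 := by
  simp [assocMat, pmat, Matrix.mul_apply, Fin.sum_univ_two]
lemma assoc11 {l : ℕ} (c : Fin l → ℝ) : assocMat c 1 1 = pmat c 0 1 := by
  simp [assocMat, pmat, Matrix.mul_apply, Fin.sum_univ_two]

/-- Corners of the inverse of a tridiagonal matrix (Bar-Natan & Lawrence):
if the bottom-left entry `γ` of the associated `2 × 2` matrix
`[[α,β],[γ,δ]]` is nonzero, then `Λ(c_1,...,c_l)` is invertible and its
inverse has corners `-α/γ` (top-left), `-δ/γ` (bottom-right) and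
`(-1)^(l+1)/γ` (top-right and bottom-left). -/
theorem tridiag_inv_corners {l : ℕ} (hl : 0 < l) (c : Fin l → ℝ)
    (hγ : assocMat c 1 0 ≠ 0) :
    IsUnit (tridiag c) ∧
    (tridiag c)⁻¹ ⟨0, hl⟩ ⟨0, hl⟩ = -(assocMat c 0 0) / assocMat c 1 0 ∧
    (tridiag c)⁻¹ ⟨l - 1, by omega⟩ ⟨l - 1, by omega⟩ =
      -(assocMat c 1 1) / assocMat c 1 0 ∧
    (tridiag c)⁻¹ ⟨0, hl⟩ ⟨l - 1, by omega⟩ = (-1) ^ (l + 1) / assocMat c 1 0 ∧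
    (tridiag c)⁻¹ ⟨l - 1, by omega⟩ ⟨0, hl⟩ = (-1) ^ (l + 1) / assocMat c 1 0 := by
  obtain ⟨m, rfl⟩ : ∃ m, l = m + 1 := ⟨l - 1, by omega⟩
  have hdet : (tridiag c).det = assocMat c 1 0 := by rw [det_tridiag, assoc10]
  have hdet0 : (tridiag c).det ≠ 0 := by rw [hdet]; exact hγ
  have hunit : IsUnit (tridiag c) := by
    rw [Matrix.isUnit_iff_isUnit_det]
    exact isUnit_iff_ne_zero.mpr hdet0
  have hinv : ∀ i j, (tridiag c)⁻¹ i j = (tridiag c).adjugate i j / (tridiag c).det := by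
    intro i j
    rw [Matrix.inv_def, Ring.inverse_eq_inv']
    simp [div_eq_inv_mul]
  have h0 : (⟨0, hl⟩ : Fin (m+1)) = 0 := rfl
  have hlast : (⟨m+1-1, by omega⟩ : Fin (m+1)) = Fin.last m := rfl
  have hsign : ((-1 : ℝ)) ^ m = (-1) ^ (m + 1 + 1) := by
    rw [pow_succ, pow_succ]; ring
  refine ⟨hunit, ?_, ?_, ?_, ?_⟩
  · rw [h0, hinv, adj00, hdet, assoc00] <;> ring
  · rw [hlast, hinv, adj_last, hdet, assoc11] <;> ring
  · rw [h0, hlast, hinv, adj_corner, hdet, ← hsign] <;> ring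
  · rw [h0, hlast, hinv, adj_corner', hdet, ← hsign] <;> ring
end

section
/- Let Delta(t) be a Laurent polynomial over Q with Delta(t^{-1}) = Delta(t), Delta(1) = 1, related to nabla(z) = 1 + a_2 z^2 + a_4 z^4 + (higher even terms) by nabla(t - t^{-1}) = Delta(t^2). Then the power series expansion of Delta(e^h) in Q[[h]] is 1 + a_2 h^2 + (a_2/12 + a_4) h^4 + O(h^6), and consequently log(Delta(e^h)) = a_2 h^2 + (a_2/12 - a_2^2/2 + a_4) h^4 + O(h^6). -/
open PowerSeries

/-- The function `ℝ → ℝ` associated to a Laurent polynomial with rational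
coefficients `d : ℤ →₀ ℚ`, namely `t ↦ ∑_n d_n t^n`. -/
noncomputable def laurentEval (d : ℤ →₀ ℚ) (t : ℝ) : ℝ :=
  d.sum fun n c => (c : ℝ) * t ^ n

/-- The formal power series `Δ(e^h) = ∑_n d_n e^(n h) ∈ ℚ⟦h⟧` associated to a
Laurent polynomial `Δ(t) = ∑_n d_n t^n` with `d : ℤ →₀ ℚ`. -/
noncomputable def laurentExpSeries (d : ℤ →₀ ℚ) : PowerSeries ℚ :=
  d.sum fun n c => PowerSeries.mk fun k => c * (n : ℚ) ^ k / (Nat.factorial k : ℚ)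

/-- The formal logarithm of a power series with constant term `1`:
`log f = ∑_{k ≥ 1} (-1)^(k+1) (f-1)^k / k`. -/
noncomputable def formalLog (f : PowerSeries ℚ) : PowerSeries ℚ :=
  PowerSeries.mk fun n =>
    ∑ k ∈ Finset.Icc 1 n, ((-1 : ℚ) ^ (k + 1) / (k : ℚ)) *
      PowerSeries.coeff n ((f - 1) ^ k)

/-! ### Auxiliary lemmas -/

/-- The `k`-th moment `∑_n d_n n^k` of a Laurent polynomial's coefficients. -/
noncomputable def Mnt (d : ℤ →₀ ℚ) (k : ℕ) : ℚ := d.sum fun n c => c * (n : ℚ) ^ k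

lemma coeff_les (d : ℤ →₀ ℚ) (k : ℕ) :
    coeff k (laurentExpSeries d) = Mnt d k / (Nat.factorial k : ℚ) := by
  rw [laurentExpSeries, map_finsuppSum, Mnt, Finsupp.sum, Finsupp.sum, Finset.sum_div]
  simp [coeff_mk]

lemma Mnt_odd (d : ℤ →₀ ℚ) (hsym : ∀ n : ℤ, d (-n) = d n) (k : ℕ) (hk : Odd k) :
    Mnt d k = 0 := by
  have h : Mnt d k = - Mnt d k := by
    simp only [Mnt, Finsupp.sum]
    rw [← Finset.sum_neg_distrib]
    refine Finset.sum_nbij' (fun n => -n) (fun n => -n) ?_ ?_ ?_ ?_ ?_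
    · intro n hn; simp only [Finsupp.mem_support_iff] at *; rwa [hsym]
    · intro n hn; simp only [Finsupp.mem_support_iff] at *; rwa [hsym]
    · intro n _; ring
    · intro n _; ring
    · intro n _
      rw [hsym]
      push_cast
      rw [hk.neg_pow]
      ring
  linarith

lemma Mnt_zero (d : ℤ →₀ ℚ) (h1 : laurentEval d 1 = 1) : Mnt d 0 = 1 := by
  have : ((Mnt d 0 : ℚ) : ℝ) = 1 := by
    rw [Mnt, ← h1, laurentEval]
    simp only [Finsupp.sum, one_zpow, pow_zero, mul_one]
    push_cast
    ring
  exact_mod_cast this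

lemma cE (j k : ℕ) : coeff k ((exp ℚ)^j) = (j:ℚ)^k / (Nat.factorial k) := by
  rw [exp_pow_eq_rescale_exp, coeff_rescale, coeff_exp]
  simp [mul_one_div]
  rw [div_eq_mul_inv]

lemma hXz : (X : PowerSeries ℚ) ∣ ((exp ℚ)^2 - 1) := by
  rw [PowerSeries.X_dvd_iff]
  simp [constantCoeff_exp]

lemma hzero (m j k : ℕ) (hk : k < m) :
    coeff k (((exp ℚ)^2 - 1)^m * (exp ℚ)^j) = 0 :=
  PowerSeries.X_pow_dvd_iff.mp (Dvd.dvd.mul_right (pow_dvd_pow_of_dvd hXz m) _) k hk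

lemma cz (k : ℕ) : (coeff k ((exp ℚ)^2 - 1) : ℚ)
    = 2^k/(Nat.factorial k) - if k = 0 then 1 else 0 := by
  rw [map_sub, cE 2 k, PowerSeries.coeff_one]
  norm_num

lemma e0 : coeff 0 ((exp ℚ)^2 - 1) = 0 := by rw [cz]; norm_num
lemma e1 : coeff 1 ((exp ℚ)^2 - 1) = 2 := by rw [cz]; norm_num
lemma e2 : coeff 2 ((exp ℚ)^2 - 1) = 2 := by rw [cz]; norm_num [Nat.factorial]
lemma e3 : coeff 3 ((exp ℚ)^2 - 1) = 4/3 := by rw [cz]; norm_num [Nat.factorial]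
lemma e4 : coeff 4 ((exp ℚ)^2 - 1) = 2/3 := by rw [cz]; norm_num [Nat.factorial]

lemma w0 : coeff 0 (((exp ℚ)^2 - 1)^2) = 0 := by
  rw [pow_two, coeff_mul, Finset.Nat.sum_antidiagonal_eq_sum_range_succ_mk]
  simp [Finset.sum_range_succ, e0]
lemma w1 : coeff 1 (((exp ℚ)^2 - 1)^2) = 0 := by
  rw [pow_two, coeff_mul, Finset.Nat.sum_antidiagonal_eq_sum_range_succ_mk]
  simp [Finset.sum_range_succ, e0]
lemma w2 : coeff 2 (((exp ℚ)^2 - 1)^2) = 4 := by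
  rw [pow_two, coeff_mul, Finset.Nat.sum_antidiagonal_eq_sum_range_succ_mk]
  simp [Finset.sum_range_succ, cE]
  norm_num [Nat.factorial]
lemma w3 : coeff 3 (((exp ℚ)^2 - 1)^2) = 8 := by
  rw [pow_two, coeff_mul, Finset.Nat.sum_antidiagonal_eq_sum_range_succ_mk]
  simp [Finset.sum_range_succ, cE]
  norm_num [Nat.factorial]
lemma w4 : coeff 4 (((exp ℚ)^2 - 1)^2) = 28/3 := by
  rw [pow_two, coeff_mul, Finset.Nat.sum_antidiagonal_eq_sum_range_succ_mk]
  simp [Finset.sum_range_succ, cE]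
  norm_num [Nat.factorial]
lemma w4' : coeff 4 (((exp ℚ)^2 - 1)^4) = 16 := by
  have h : ((exp ℚ)^2 - 1)^4 = ((exp ℚ)^2 - 1)^2 * ((exp ℚ)^2 - 1)^2 := by ring
  rw [h, coeff_mul, Finset.Nat.sum_antidiagonal_eq_sum_range_succ_mk]
  simp [Finset.sum_range_succ, w0, w1, w2, w3, w4]
  norm_num

lemma hz4low : ∀ i < 4, coeff i (((exp ℚ)^2 - 1)^4) = 0 :=
  PowerSeries.X_pow_dvd_iff.mp (pow_dvd_pow_of_dvd hXz 4)

lemma c22 (j : ℕ) : coeff 2 (((exp ℚ)^2-1)^2 * (exp ℚ)^j) = 4 := by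
  rw [coeff_mul, Finset.Nat.sum_antidiagonal_eq_sum_range_succ_mk]
  simp [Finset.sum_range_succ, w0, w1, w2, cE]

lemma c42 (j : ℕ) : coeff 4 (((exp ℚ)^2-1)^2 * (exp ℚ)^j)
    = 4*(j:ℚ)^2/2 + 8*(j:ℚ) + 28/3 := by
  rw [coeff_mul, Finset.Nat.sum_antidiagonal_eq_sum_range_succ_mk]
  simp [Finset.sum_range_succ, w0, w1, w2, w3, w4, cE]
  ring

lemma c44 (j : ℕ) : coeff 4 (((exp ℚ)^2-1)^4 * (exp ℚ)^j) = 16 := by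
  rw [coeff_mul, Finset.Nat.sum_antidiagonal_eq_sum_range_succ_mk]
  simp [Finset.sum_range_succ, hz4low 0 (by norm_num), hz4low 1 (by norm_num),
    hz4low 2 (by norm_num), hz4low 3 (by norm_num), w4', cE]

lemma sumexp2 (d : ℤ →₀ ℚ) (Dq : ℚ) :
    (d.sum fun n c => c * (Dq + 2*(n:ℚ))^2 / 2)
      = Dq^2/2 * Mnt d 0 + 2*Dq * Mnt d 1 + 2 * Mnt d 2 := by
  simp only [Mnt, Finsupp.sum, Finset.mul_sum]
  rw [← Finset.sum_add_distrib, ← Finset.sum_add_distrib]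
  exact Finset.sum_congr rfl fun n _ => by ring

lemma sumexp4 (d : ℤ →₀ ℚ) (Dq : ℚ) :
    (d.sum fun n c => c * (Dq + 2*(n:ℚ))^4 / 24)
      = Dq^4/24 * Mnt d 0 + Dq^3/3 * Mnt d 1 + Dq^2 * Mnt d 2
        + 4*Dq/3 * Mnt d 3 + 2/3 * Mnt d 4 := by
  simp only [Mnt, Finsupp.sum, Finset.mul_sum]
  rw [← Finset.sum_add_distrib, ← Finset.sum_add_distrib, ← Finset.sum_add_distrib,
    ← Finset.sum_add_distrib]
  exact Finset.sum_congr rfl fun n _ => by ring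

lemma coeff_algebraMap_mul (a : ℚ) (w : PowerSeries ℚ) (k : ℕ) :
    coeff k (algebraMap ℚ (PowerSeries ℚ) a * w) = a * coeff k w := by
  rw [← Algebra.smul_def, map_smul, smul_eq_mul]

lemma extract (d : ℤ →₀ ℚ) (N : Polynomial ℚ) (D : ℕ)
    (hNodd : ∀ m : ℕ, Odd m → N.coeff m = 0)
    (hPQ : (∑ m ∈ Finset.range (N.natDegree+1),
        Polynomial.C (N.coeff m) * (Polynomial.X^2 - 1)^m * Polynomial.X^(D-m))
      = d.sum fun n c => Polynomial.C c * Polynomial.X^(((D:ℤ) + 2*n).toNat))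
    (k : ℕ) (hk : k ≤ 4) :
    N.coeff 0 * coeff k (((exp ℚ)^2-1)^0 * (exp ℚ)^(D-0))
      + N.coeff 2 * coeff k (((exp ℚ)^2-1)^2 * (exp ℚ)^(D-2))
      + N.coeff 4 * coeff k (((exp ℚ)^2-1)^4 * (exp ℚ)^(D-4))
    = d.sum fun n c => c * ((((D:ℤ)+2*n).toNat : ℕ):ℚ)^k / (Nat.factorial k) := by
  have h := congrArg (fun p => coeff k (Polynomial.aeval (exp ℚ) p)) hPQ
  rw [map_sum, map_sum] at h
  simp only [map_mul, map_pow, map_sub, map_one, Polynomial.aeval_C, Polynomial.aeval_X,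
    mul_assoc, coeff_algebraMap_mul] at h
  rw [map_finsuppSum, map_finsuppSum] at h
  set f : ℕ → ℚ := fun m => N.coeff m * coeff k (((exp ℚ)^2-1)^m * (exp ℚ)^(D-m)) with hf
  have hL : (∑ m ∈ Finset.range (N.natDegree+1), f m) = f 0 + f 2 + f 4 := by
    have h1 : (∑ m ∈ Finset.range (N.natDegree+1), f m)
        = ∑ m ∈ Finset.range (max (N.natDegree+1) 5), f m := by
      apply Finset.sum_subset (Finset.range_subset_range.2 (le_max_left _ _))
      intro m hm hnot
      simp only [Finset.mem_range] at hm hnot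
      have : N.natDegree < m := by omega
      rw [hf]
      simp [Polynomial.coeff_eq_zero_of_natDegree_lt this]
    have h2 : (∑ m ∈ Finset.range 5, f m)
        = ∑ m ∈ Finset.range (max (N.natDegree+1) 5), f m := by
      apply Finset.sum_subset (Finset.range_subset_range.2 (le_max_right _ _))
      intro m hm hnot
      simp only [Finset.mem_range] at hm hnot
      have h5 : 5 ≤ m := by omega
      rw [hf]
      simp [hzero m (D-m) k (by omega)]
    rw [h1, ← h2]
    simp only [Finset.sum_range_succ, Finset.sum_range_zero, hf]
    rw [hNodd 1 (by decide), hNodd 3 (by decide)]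
    ring
  rw [hL] at h
  simp only [hf] at h
  refine h.trans ?_
  refine Finsupp.sum_congr fun n hn => ?_
  simp [map_mul, map_pow, Polynomial.aeval_C, Polynomial.aeval_X, coeff_algebraMap_mul, cE,
    div_eq_mul_inv, mul_assoc]

lemma PQ (d : ℤ →₀ ℚ) (N : Polynomial ℚ)
    (hconv : ∀ t : ℝ, t ≠ 0 → (N.map (algebraMap ℚ ℝ)).eval (t - t⁻¹) = laurentEval d (t ^ 2))
    (D : ℕ) (hDdeg : N.natDegree ≤ D) (hDn : ∀ n ∈ d.support, (0:ℤ) ≤ (D:ℤ) + 2*n) :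
    (∑ m ∈ Finset.range (N.natDegree+1),
        Polynomial.C (N.coeff m) * (Polynomial.X^2 - 1)^m * Polynomial.X^(D-m))
      = d.sum fun n c => Polynomial.C c * Polynomial.X^(((D:ℤ) + 2*n).toNat) := by
  apply Polynomial.map_injective (algebraMap ℚ ℝ) (algebraMap ℚ ℝ).injective
  apply Polynomial.eq_of_infinite_eval_eq
  apply Set.Infinite.mono (s := {(0:ℝ)}ᶜ)
  swap
  · exact (Set.finite_singleton 0).infinite_compl
  intro t ht
  simp only [Set.mem_compl_iff, Set.mem_singleton_iff] at ht
  simp only [Set.mem_setOf_eq]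
  have h1 := hconv t ht
  rw [Finsupp.sum, Polynomial.map_sum, Polynomial.map_sum]
  simp only [Polynomial.map_mul, Polynomial.map_pow, Polynomial.map_sub, Polynomial.map_one,
    Polynomial.map_C, Polynomial.map_X, Polynomial.eval_finset_sum, Polynomial.eval_mul,
    Polynomial.eval_pow, Polynomial.eval_sub, Polynomial.eval_one, Polynomial.eval_C,
    Polynomial.eval_X]
  have hdeg : (N.map (algebraMap ℚ ℝ)).natDegree < N.natDegree + 1 :=
    Nat.lt_succ_of_le Polynomial.natDegree_map_le
  rw [Polynomial.eval_eq_sum_range' hdeg] at h1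
  have key : t ^ D * (∑ i ∈ Finset.range (N.natDegree + 1),
      (N.map (algebraMap ℚ ℝ)).coeff i * (t - t⁻¹) ^ i) = t ^ D * laurentEval d (t^2) := by
    rw [h1]
  calc ∑ m ∈ Finset.range (N.natDegree+1),
        (algebraMap ℚ ℝ) (N.coeff m) * (t^2-1)^m * t^(D-m)
      = t ^ D * (∑ i ∈ Finset.range (N.natDegree + 1),
        (N.map (algebraMap ℚ ℝ)).coeff i * (t - t⁻¹) ^ i) := by
        rw [Finset.mul_sum]
        refine Finset.sum_congr rfl fun m hm => ?_
        have hmD : m ≤ D := le_trans (Nat.lt_succ_iff.mp (Finset.mem_range.mp hm)) hDdeg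
        rw [Polynomial.coeff_map]
        have h2 : (t - t⁻¹)^m * t^m = (t^2 - 1)^m := by
          rw [← mul_pow]
          congr 1
          field_simp
        have h3 : t ^ (D - m) * t ^ m = t ^ D := pow_sub_mul_pow t hmD
        calc (algebraMap ℚ ℝ) (N.coeff m) * (t^2-1)^m * t^(D-m)
            = (algebraMap ℚ ℝ) (N.coeff m) * ((t - t⁻¹)^m * t^m) * t^(D-m) := by rw [h2]
          _ = (t ^ (D-m) * t ^ m) * ((algebraMap ℚ ℝ) (N.coeff m) * (t - t⁻¹)^m) := by ring
          _ = t ^ D * ((algebraMap ℚ ℝ) (N.coeff m) * (t - t⁻¹)^m) := by rw [h3]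
    _ = t ^ D * laurentEval d (t^2) := key
    _ = ∑ n ∈ d.support, (algebraMap ℚ ℝ) (d n) * t ^ ((D:ℤ) + 2*n).toNat := by
        rw [laurentEval, Finsupp.sum, Finset.mul_sum]
        refine Finset.sum_congr rfl fun n hn => ?_
        have h4 : t ^ (((D:ℤ) + 2*n).toNat) = t ^ ((D:ℤ) + 2*n) := by
          rw [← zpow_natCast, Int.toNat_of_nonneg (hDn n hn)]
        rw [h4, zpow_add₀ ht, zpow_natCast]
        have h5 : t ^ (2*n) = ((t^2 : ℝ)) ^ n := by
          rw [← zpow_natCast t 2, ← zpow_mul]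
          norm_num
        rw [h5]
        simp [algebraMap]
        ring

lemma moments (d : ℤ →₀ ℚ) (N : Polynomial ℚ)
    (hN0 : N.coeff 0 = 1)
    (hNodd : ∀ m : ℕ, Odd m → N.coeff m = 0)
    (hconv : ∀ t : ℝ, t ≠ 0 → (N.map (algebraMap ℚ ℝ)).eval (t - t⁻¹) = laurentEval d (t ^ 2))
    (hM0 : Mnt d 0 = 1) (hM1 : Mnt d 1 = 0) (hM3 : Mnt d 3 = 0) :
    Mnt d 2 = 2 * N.coeff 2 ∧ Mnt d 4 = 2 * N.coeff 2 + 24 * N.coeff 4 := by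
  set D : ℕ := N.natDegree + 2 * (d.support.sup fun n => n.natAbs) + 4 with hD
  have hDdeg : N.natDegree ≤ D := by omega
  have hD4 : 4 ≤ D := by omega
  have hDn : ∀ n ∈ d.support, (0:ℤ) ≤ (D:ℤ) + 2*n := by
    intro n hn
    have h : n.natAbs ≤ d.support.sup fun n => n.natAbs :=
      Finset.le_sup (f := fun n : ℤ => n.natAbs) hn
    omega
  have hPQ := PQ d N hconv D hDdeg hDn
  have hcast : ∀ n ∈ d.support, ((((D:ℤ)+2*n).toNat : ℕ):ℚ) = (D:ℚ) + 2*(n:ℚ) := by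
    intro n hn
    have h := Int.toNat_of_nonneg (hDn n hn)
    calc ((((D:ℤ)+2*n).toNat : ℕ):ℚ) = (((((D:ℤ)+2*n).toNat : ℕ):ℤ):ℚ) := by push_cast; ring
      _ = (((D:ℤ)+2*n : ℤ):ℚ) := by rw [h]
      _ = (D:ℚ) + 2*(n:ℚ) := by push_cast; ring
  have hcast2 : ((D-2 : ℕ):ℚ) = (D:ℚ) - 2 := by
    rw [Nat.cast_sub (by omega)]; norm_num
  have eq2 := extract d N D hNodd hPQ 2 (by norm_num)
  have eq4 := extract d N D hNodd hPQ 4 (by norm_num)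
  have e2' := Finsupp.sum_congr (f := d)
    (g1 := fun n c => c * ((((D:ℤ)+2*n).toNat : ℕ):ℚ)^2/(Nat.factorial 2))
    (g2 := fun n c => c * ((D:ℚ) + 2*(n:ℚ))^2 / 2)
    (fun n hn => by simp only [hcast n hn]; norm_num [Nat.factorial])
  have e4' := Finsupp.sum_congr (f := d)
    (g1 := fun n c => c * ((((D:ℤ)+2*n).toNat : ℕ):ℚ)^4/(Nat.factorial 4))
    (g2 := fun n c => c * ((D:ℚ) + 2*(n:ℚ))^4 / 24)
    (fun n hn => by simp only [hcast n hn]; norm_num [Nat.factorial])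
  rw [e2'] at eq2
  rw [e4'] at eq4
  rw [sumexp2, hM0, hM1] at eq2
  rw [sumexp4, hM0, hM1, hM3] at eq4
  rw [pow_zero, one_mul, Nat.sub_zero, cE D 2, c22 (D-2), hzero 4 (D-4) 2 (by norm_num),
    hN0] at eq2
  rw [pow_zero, one_mul, Nat.sub_zero, cE D 4, c42 (D-2), c44 (D-4), hN0, hcast2] at eq4
  norm_num [Nat.factorial] at eq2 eq4
  have hM2 : Mnt d 2 = 2 * N.coeff 2 := by linarith
  refine ⟨hM2, ?_⟩
  rw [hM2] at eq4
  linear_combination (-3/2) * eq4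

/-- Expansion of the Alexander polynomial at `t = e^h`: if
`Δ(t) = ∑_n d_n t^n` is a symmetric Laurent polynomial with `Δ(1) = 1` and
`∇(z) = 1 + a₂ z² + a₄ z⁴ + (higher even terms)` satisfies `∇(t - t⁻¹) = Δ(t²)`,
then `Δ(e^h) = 1 + a₂ h² + (a₂/12 + a₄) h⁴ + O(h⁶)` and
`log Δ(e^h) = a₂ h² + (a₂/12 - a₂²/2 + a₄) h⁴ + O(h⁶)`, where `O(h⁶)` means
equality of the coefficients in degrees `0` through `5`. -/
theorem alexander_expansion_exp (d : ℤ →₀ ℚ) (N : Polynomial ℚ)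
    (hsym : ∀ n : ℤ, d (-n) = d n)
    (h1 : laurentEval d 1 = 1)
    (hN0 : N.coeff 0 = 1)
    (hNodd : ∀ m : ℕ, Odd m → N.coeff m = 0)
    (hconv : ∀ t : ℝ, t ≠ 0 →
      (N.map (algebraMap ℚ ℝ)).eval (t - t⁻¹) = laurentEval d (t ^ 2)) :
    (coeff 0 (laurentExpSeries d) = 1 ∧
     coeff 1 (laurentExpSeries d) = 0 ∧
     coeff 2 (laurentExpSeries d) = N.coeff 2 ∧
     coeff 3 (laurentExpSeries d) = 0 ∧
     coeff 4 (laurentExpSeries d) = N.coeff 2 / 12 + N.coeff 4 ∧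
     coeff 5 (laurentExpSeries d) = 0) ∧
    (coeff 0 (formalLog (laurentExpSeries d)) = 0 ∧
     coeff 1 (formalLog (laurentExpSeries d)) = 0 ∧
     coeff 2 (formalLog (laurentExpSeries d)) = N.coeff 2 ∧
     coeff 3 (formalLog (laurentExpSeries d)) = 0 ∧
     coeff 4 (formalLog (laurentExpSeries d)) =
       N.coeff 2 / 12 - (N.coeff 2) ^ 2 / 2 + N.coeff 4 ∧
     coeff 5 (formalLog (laurentExpSeries d)) = 0) := by
  have hM0 := Mnt_zero d h1
  have hM1 := Mnt_odd d hsym 1 (by decide)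
  have hM3 := Mnt_odd d hsym 3 (by decide)
  have hM5 := Mnt_odd d hsym 5 (by decide)
  obtain ⟨hM2, hM4⟩ := moments d N hN0 hNodd hconv hM0 hM1 hM3
  have c0 : coeff 0 (laurentExpSeries d) = 1 := by
    rw [coeff_les, hM0]; norm_num
  have c1 : coeff 1 (laurentExpSeries d) = 0 := by
    rw [coeff_les, hM1]; norm_num
  have c2 : coeff 2 (laurentExpSeries d) = N.coeff 2 := by
    rw [coeff_les, hM2]; norm_num [Nat.factorial]
  have c3 : coeff 3 (laurentExpSeries d) = 0 := by
    rw [coeff_les, hM3]; norm_num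
  have c4 : coeff 4 (laurentExpSeries d) = N.coeff 2 / 12 + N.coeff 4 := by
    rw [coeff_les, hM4]; norm_num [Nat.factorial]; ring
  have c5 : coeff 5 (laurentExpSeries d) = 0 := by
    rw [coeff_les, hM5]; norm_num
  have g0 : coeff 0 (laurentExpSeries d - 1) = 0 := by
    rw [map_sub, c0, PowerSeries.coeff_one]; norm_num
  have g1 : coeff 1 (laurentExpSeries d - 1) = 0 := by
    rw [map_sub, c1, PowerSeries.coeff_one]; norm_num
  have g2 : coeff 2 (laurentExpSeries d - 1) = N.coeff 2 := by
    rw [map_sub, c2, PowerSeries.coeff_one]; norm_num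
  have g3 : coeff 3 (laurentExpSeries d - 1) = 0 := by
    rw [map_sub, c3, PowerSeries.coeff_one]; norm_num
  have g4 : coeff 4 (laurentExpSeries d - 1) = N.coeff 2 / 12 + N.coeff 4 := by
    rw [map_sub, c4, PowerSeries.coeff_one]; norm_num
  have g5 : coeff 5 (laurentExpSeries d - 1) = 0 := by
    rw [map_sub, c5, PowerSeries.coeff_one]; norm_num
  have hgd : (X : PowerSeries ℚ)^2 ∣ (laurentExpSeries d - 1) := by
    rw [PowerSeries.X_pow_dvd_iff]
    intro m hm
    interval_cases m
    · exact g0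
    · exact g1
  have hgk : ∀ k : ℕ, 3 ≤ k → ∀ m : ℕ, m ≤ 5 →
      coeff m ((laurentExpSeries d - 1)^k) = 0 := by
    intro k hk m hm
    have ha : (X : PowerSeries ℚ)^6 ∣ ((X : PowerSeries ℚ)^2)^k := by
      rw [← pow_mul]; exact pow_dvd_pow X (by omega)
    exact PowerSeries.X_pow_dvd_iff.mp (ha.trans (pow_dvd_pow_of_dvd hgd k)) m (by omega)
  have hc0' : constantCoeff (laurentExpSeries d) = 1 := by
    rw [← coeff_zero_eq_constantCoeff]; exact c0
  have q2 : coeff 2 ((laurentExpSeries d - 1)^2) = 0 := by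
    rw [pow_two, coeff_mul, Finset.Nat.sum_antidiagonal_eq_sum_range_succ_mk]
    simp [Finset.sum_range_succ, hc0', c1, c2]
  have q3 : coeff 3 ((laurentExpSeries d - 1)^2) = 0 := by
    rw [pow_two, coeff_mul, Finset.Nat.sum_antidiagonal_eq_sum_range_succ_mk]
    simp [Finset.sum_range_succ, hc0', c1, c2, c3]
  have q4 : coeff 4 ((laurentExpSeries d - 1)^2) = (N.coeff 2)^2 := by
    rw [pow_two, coeff_mul, Finset.Nat.sum_antidiagonal_eq_sum_range_succ_mk]
    simp [Finset.sum_range_succ, hc0', c1, c2, c3, c4]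
    ring
  have q5 : coeff 5 ((laurentExpSeries d - 1)^2) = 0 := by
    rw [pow_two, coeff_mul, Finset.Nat.sum_antidiagonal_eq_sum_range_succ_mk]
    simp [Finset.sum_range_succ, hc0', c1, c2, c3, c4, c5]
  have L0 : coeff 0 (formalLog (laurentExpSeries d)) = 0 := by
    rw [formalLog, coeff_mk]
    simp
  have L1 : coeff 1 (formalLog (laurentExpSeries d)) = 0 := by
    rw [formalLog, coeff_mk, Finset.Icc_self, Finset.sum_singleton]
    simp [g1]
  have L2 : coeff 2 (formalLog (laurentExpSeries d)) = N.coeff 2 := by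
    rw [formalLog, coeff_mk, Finset.sum_Icc_succ_top (by norm_num), Finset.Icc_self,
      Finset.sum_singleton]
    simp [g2, q2]
  have L3 : coeff 3 (formalLog (laurentExpSeries d)) = 0 := by
    rw [formalLog, coeff_mk, Finset.sum_Icc_succ_top (by norm_num),
      Finset.sum_Icc_succ_top (by norm_num), Finset.Icc_self, Finset.sum_singleton]
    simp [g3, q3, hgk 3 (by norm_num) 3 (by norm_num)]
  have L4 : coeff 4 (formalLog (laurentExpSeries d)) =
      N.coeff 2 / 12 - (N.coeff 2) ^ 2 / 2 + N.coeff 4 := by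
    rw [formalLog, coeff_mk, Finset.sum_Icc_succ_top (by norm_num),
      Finset.sum_Icc_succ_top (by norm_num), Finset.sum_Icc_succ_top (by norm_num),
      Finset.Icc_self, Finset.sum_singleton]
    simp [g4, q4, hgk 3 (by norm_num) 4 (by norm_num), hgk 4 (by norm_num) 4 (by norm_num)]
    ring
  have L5 : coeff 5 (formalLog (laurentExpSeries d)) = 0 := by
    rw [formalLog, coeff_mk, Finset.sum_Icc_succ_top (by norm_num),
      Finset.sum_Icc_succ_top (by norm_num), Finset.sum_Icc_succ_top (by norm_num),
      Finset.sum_Icc_succ_top (by norm_num), Finset.Icc_self, Finset.sum_singleton]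
    simp [g5, q5, hgk 3 (by norm_num) 5 (by norm_num), hgk 4 (by norm_num) 5 (by norm_num),
      hgk 5 (by norm_num) 5 (by norm_num)]
  exact ⟨⟨c0, c1, c2, c3, c4, c5⟩, ⟨L0, L1, L2, L3, L4, L5⟩⟩
end
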